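/- Let c > 0 be an integer, let D < 0 be a fundamental discriminant, let K = ℚ(√D) with ring of integers O_K, let p be a prime number that splits in K, and let 𝔭 be a prime ideal of O_K dividing p. If p^c < |D|/4, then the order of the ideal class of 𝔭 in the class group Cl(D) is strictly larger than c. -/

import Mathlib

set_option synthInstance.maxHeartbeats 1000000
set_option maxHeartbeats 1000000

open NumberField

/-- `D` is a fundamental discriminant: either `D ≡ 1 (mod 4)` and `D` is squarefree,
or `D = 4m` for a squarefree integer `m ≡ 2` or `3 (mod 4)`. (We exclude the degenerate
case `D = 1`, so that `D` is the discriminant of a quadratic number field.) -/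
def IsFundamentalDiscriminant (D : ℤ) : Prop :=
  D ≠ 1 ∧ ((D % 4 = 1 ∧ Squarefree D) ∨
    ∃ m : ℤ, D = 4 * m ∧ Squarefree m ∧ (m % 4 = 2 ∨ m % 4 = 3))

/-- A prime number `p` splits in the number field `K`:
`p O_K = 𝔭·𝔭′` for two distinct prime ideals of the ring of integers. -/
def SplitsIn (p : ℕ) (K : Type) [Field K] [NumberField K] : Prop :=
  ∃ P Q : Ideal (𝓞 K), P ≠ Q ∧ P.IsPrime ∧ Q.IsPrime ∧
    Ideal.span {(p : 𝓞 K)} = P * Q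

open Polynomial in
theorem OrderGtAux.quad_expand {p : ℚ[X]} (hm : p.Monic) (hd : p.natDegree = 2) :
    p = X ^ 2 + C (p.coeff 1) * X + C (p.coeff 0) := by
  ext n
  rcases n with _ | _ | _ | n
  · simp
  · simp [coeff_X_pow]
  · have : p.coeff 2 = 1 := by
      have := hm.coeff_natDegree
      rwa [hd] at this
    simp [coeff_X_pow, this]
  · rw [p.coeff_eq_zero_of_natDegree_lt (by omega)]
    simp [coeff_X_pow]

theorem OrderGtAux.norm_int_cast (K : Type) [Field K] [NumberField K]
    (hdeg : Module.finrank ℚ K = 2) (z : ℤ) :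
    Algebra.norm ℤ (algebraMap ℤ (𝓞 K) z) = z ^ 2 := by
  rw [Algebra.norm_algebraMap_of_basis (RingOfIntegers.basis K),
    ← Module.finrank_eq_card_chooseBasisIndex, RingOfIntegers.rank, hdeg]

theorem OrderGtAux.absNorm_span_p (K : Type) [Field K] [NumberField K]
    (hdeg : Module.finrank ℚ K = 2) (p : ℕ) :
    Ideal.absNorm (Ideal.span {(p : 𝓞 K)}) = p ^ 2 := by
  rw [Ideal.absNorm_span_singleton]
  have : ((p : ℤ) : 𝓞 K) = (p : 𝓞 K) := by push_cast; rfl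
  rw [show (p : 𝓞 K) = algebraMap ℤ (𝓞 K) (p : ℤ) by simp [this],
    OrderGtAux.norm_int_cast K hdeg]
  simp [Int.natAbs_pow]

theorem OrderGtAux.split_structure (K : Type) [Field K] [NumberField K]
    (p : ℕ) (hp : p.Prime) (hsplit : SplitsIn p K)
    (P : Ideal (𝓞 K)) (hP : P.IsPrime) (hmem : (p : 𝓞 K) ∈ P) :
    ∃ R : Ideal (𝓞 K), Ideal.span {(p : 𝓞 K)} = P * R ∧ P ≠ R ∧ R.IsPrime := by
  obtain ⟨P', Q, hPQ, hP', hQ', hspan⟩ := hsplit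
  have hpne : (p : 𝓞 K) ≠ 0 := Nat.cast_ne_zero.mpr hp.pos.ne'
  have hspanne : Ideal.span {(p : 𝓞 K)} ≠ ⊥ := by
    simpa [Ideal.span_singleton_eq_bot] using hpne
  have hP'0 : P' ≠ ⊥ := by rintro rfl; simp [hspan] at hspanne
  have hQ0 : Q ≠ ⊥ := by rintro rfl; simp [hspan] at hspanne
  have hle : P' * Q ≤ P := by
    rw [← hspan]
    exact Ideal.span_le.mpr (by simpa using hmem)
  rcases (Ideal.IsPrime.mul_le (hp := hP)).mp hle with h | h
  · have : P' = P := (hP'.isMaximal hP'0).eq_of_le hP.ne_top h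
    exact ⟨Q, by rw [hspan, this], fun hh => hPQ (this.symm ▸ hh.symm ▸ rfl), hQ'⟩
  · have : Q = P := (hQ'.isMaximal hQ0).eq_of_le hP.ne_top h
    exact ⟨P', by rw [hspan, this, mul_comm], fun hh => hPQ (this ▸ hh ▸ rfl), hP'⟩

theorem OrderGtAux.absNorm_eq_p (K : Type) [Field K] [NumberField K]
    (p : ℕ) (hp : p.Prime)
    (P R : Ideal (𝓞 K)) (hP : P.IsPrime) (hR : R.IsPrime)
    (hspan : Ideal.span {(p : 𝓞 K)} = P * R)
    (habs : Ideal.absNorm (Ideal.span {(p : 𝓞 K)}) = p ^ 2) :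
    Ideal.absNorm P = p := by
  have hmul : Ideal.absNorm P * Ideal.absNorm R = p ^ 2 := by
    rw [← _root_.map_mul Ideal.absNorm, ← hspan, habs]
  have hP1 : Ideal.absNorm P ≠ 1 := fun h => hP.ne_top (Ideal.absNorm_eq_one_iff.mp h)
  have hR1 : Ideal.absNorm R ≠ 1 := fun h => hR.ne_top (Ideal.absNorm_eq_one_iff.mp h)
  have hdvd : Ideal.absNorm P ∣ p ^ 2 := ⟨_, hmul.symm⟩
  obtain ⟨i, hi, hPi⟩ := (Nat.dvd_prime_pow hp).mp hdvd
  interval_cases i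
  · rw [pow_zero] at hPi; exact absurd hPi hP1
  · simpa using hPi
  · exfalso
    rw [hPi] at hmul
    have hpos : 0 < p ^ 2 := pow_pos hp.pos 2
    exact hR1 (by nlinarith [hmul])

open Polynomial in
theorem OrderGtAux.norm_lower_bound (K : Type) [Field K] [NumberField K]
    (hdeg : Module.finrank ℚ K = 2) (D : ℤ) (hdisc : NumberField.discr K = D) (hneg : D < 0)
    (α : 𝓞 K) (hirr : ∀ q : ℚ, algebraMap (𝓞 K) K α ≠ algebraMap ℚ K q) :
    -(D : ℚ) ≤ 4 * Algebra.norm ℚ (algebraMap (𝓞 K) K α) := by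
  classical
  set α' : K := algebraMap (𝓞 K) K α with hα'
  have hα'0 : α' ≠ 0 := fun h => hirr 0 (by simp [h])
  have li : LinearIndependent ℚ (fun i : Fin 2 => α' ^ (i : ℕ)) := by
    rw [show (fun i : Fin 2 => α' ^ (i : ℕ)) = ![1, α'] by
      funext i; fin_cases i <;> simp]
    refine linearIndependent_fin2.mpr ⟨by simpa using hα'0, fun a ha => ?_⟩
    have ha0 : a ≠ 0 := by rintro rfl; simp at ha
    apply hirr a⁻¹
    have : α' = a⁻¹ • (a • α') := by rw [smul_smul, inv_mul_cancel₀ ha0, one_smul]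
    rw [this]
    simp only [Matrix.cons_val_one, Matrix.head_cons, Matrix.cons_val_zero] at ha
    rw [ha, Algebra.algebraMap_eq_smul_one]
  have hcard : Fintype.card (Fin 2) = Module.finrank ℚ K := by simp [hdeg]
  let pb : PowerBasis ℚ K :=
    { gen := α'
      dim := 2
      basis := basisOfLinearIndependentOfCardEqFinrank li hcard
      basis_eq_pow := fun i => by
        rw [coe_basisOfLinearIndependentOfCardEqFinrank] }
  have hpbgen : pb.gen = α' := rfl
  have hint : IsIntegral ℚ α' := IsIntegral.of_finite ℚ α'
  set m : ℚ[X] := minpoly ℚ α' with hm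
  have hd2 : m.natDegree = 2 := by
    have := pb.natDegree_minpoly
    rwa [hpbgen] at this
  have hmonic : m.Monic := minpoly.monic hint
  set b1 : ℚ := m.coeff 1 with hb1
  set c1 : ℚ := m.coeff 0 with hc1
  have heq : α' ^ 2 + algebraMap ℚ K b1 * α' + algebraMap ℚ K c1 = 0 := by
    have h0 := minpoly.aeval ℚ α'
    rw [← hm, OrderGtAux.quad_expand hmonic hd2] at h0
    simpa only [map_add, map_mul, map_pow, aeval_X, aeval_C] using h0
  have h_tr_one : Algebra.trace ℚ K 1 = 2 := by
    rw [show (1 : K) = algebraMap ℚ K 1 from (map_one _).symm, Algebra.trace_algebraMap, hdeg]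
    norm_num
  have h_tr_gen : Algebra.trace ℚ K α' = -b1 := by
    have := pb.trace_gen_eq_nextCoeff_minpoly
    rw [hpbgen, ← hm, Polynomial.nextCoeff_of_natDegree_pos (by rw [hd2]; norm_num), hd2]
      at this
    exact this
  have h_tr_sq : Algebra.trace ℚ K (α' ^ 2) = b1 ^ 2 - 2 * c1 := by
    have hsq : α' ^ 2 = -(b1 • α') - c1 • (1 : K) := by
      rw [Algebra.smul_def, Algebra.smul_def, mul_one]
      linear_combination heq
    rw [hsq, map_sub, map_neg, map_smul, map_smul, h_tr_gen, h_tr_one]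
    simp only [smul_eq_mul]
    ring
  have h_norm : Algebra.norm ℚ α' = c1 := by
    have := Algebra.PowerBasis.norm_gen_eq_coeff_zero_minpoly pb
    rw [hpbgen, ← hm] at this
    simpa [show pb.dim = 2 from rfl] using this
  have h_discr_val : Algebra.discr ℚ ⇑pb.basis = b1 ^ 2 - 4 * c1 := by
    rw [Algebra.discr_def, Matrix.det_fin_two]
    simp only [Algebra.traceMatrix_apply, Algebra.traceForm_apply, pb.basis_eq_pow]
    norm_num
    rw [← pow_two, h_tr_sq, h_tr_one, h_tr_gen]
    ring
  have hcard' : Fintype.card (Module.Free.ChooseBasisIndex ℤ (𝓞 K)) = 2 := by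
    rw [← Module.finrank_eq_card_chooseBasisIndex, RingOfIntegers.rank, hdeg]
  let e : Module.Free.ChooseBasisIndex ℤ (𝓞 K) ≃ Fin 2 :=
    Fintype.equivFinOfCardEq hcard'
  let B : Module.Basis (Fin 2) ℚ K := (integralBasis K).reindex e
  let b0 : Module.Basis (Fin 2) ℤ (𝓞 K) := (RingOfIntegers.basis K).reindex e
  have hB : ∀ i, B i = algebraMap (𝓞 K) K (b0 i) := by
    intro i
    simp [B, b0, Module.Basis.coe_reindex, integralBasis_apply]
  have hBd : Algebra.discr ℚ ⇑B = (D : ℚ) := by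
    have : ⇑B = ⇑(integralBasis K) ∘ ⇑e.symm := by
      funext i; simp [B, Module.Basis.coe_reindex]
    rw [this, Algebra.discr_reindex, ← coe_discr, hdisc]
  let w : Fin 2 → 𝓞 K := ![1, α]
  let M0 : Matrix (Fin 2) (Fin 2) ℤ := b0.toMatrix w
  have hvec : ⇑pb.basis
      = Matrix.vecMul ⇑B ((M0.map (Int.cast : ℤ → ℚ)).map (algebraMap ℚ K)) := by
    funext j
    have h1 : pb.basis j = algebraMap (𝓞 K) K (w j) := by
      fin_cases j <;> simp [pb.basis_eq_pow, w, hα', show pb.dim = 2 from rfl, hpbgen]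
    have h2 : ∀ i, B i * ((M0.map (Int.cast : ℤ → ℚ)).map (algebraMap ℚ K)) i j
        = algebraMap (𝓞 K) K (b0.repr (w j) i • b0 i) := by
      intro i
      rw [hB i, Matrix.map_apply, Matrix.map_apply, map_intCast, map_zsmul, zsmul_eq_mul,
        mul_comm]
      norm_cast
    simp only [Matrix.vecMul, dotProduct]
    rw [Finset.sum_congr rfl (fun i _ => h2 i), ← map_sum, b0.sum_repr, h1]
  have h_rel : Algebra.discr ℚ ⇑pb.basis = (M0.det : ℚ) ^ 2 * (D : ℚ) := by
    rw [hvec, Algebra.discr_of_matrix_vecMul, hBd]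
    congr 1
    rw [show M0.map (Int.cast : ℤ → ℚ) = (Int.castRingHom ℚ).mapMatrix M0 from rfl,
      ← RingHom.map_det]
    rfl
  have hk : M0.det ≠ 0 := by
    intro h
    have hne := Algebra.discr_not_zero_of_basis ℚ pb.basis
    rw [h_rel, h] at hne
    simp at hne
  have h1k : (1 : ℚ) ≤ (M0.det : ℚ) ^ 2 := by
    have h1 : (1 : ℤ) ≤ M0.det ^ 2 := by
      have h2 := Int.one_le_abs (by simpa using hk)
      nlinarith [h2, sq_abs M0.det]
    exact_mod_cast h1
  have hDQ : (D : ℚ) < 0 := by exact_mod_cast hneg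
  have hle : b1 ^ 2 - 4 * c1 ≤ (D : ℚ) := by
    rw [← h_discr_val, h_rel]
    nlinarith [h1k, hDQ]
  rw [h_norm]
  nlinarith [sq_nonneg b1]

/-- Let `c > 0`, let `D < 0` be a fundamental discriminant, let `K = ℚ(√D)`, let `p` be a
prime that splits in `K` and `𝔭` a prime ideal of `O_K` dividing `p`. If `p^c < |D|/4` then
the order of the class of `𝔭` in the class group is strictly larger than `c`. -/
theorem order_gt_of_small_split_prime (c : ℕ) (hc : 0 < c)
    (D : ℤ) (hfund : IsFundamentalDiscriminant D) (hneg : D < 0)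
    (K : Type) [Field K] [NumberField K]
    (hdeg : Module.finrank ℚ K = 2) (hdisc : NumberField.discr K = D)
    (p : ℕ) (hp : p.Prime) (hsplit : SplitsIn p K)
    (P : Ideal (𝓞 K)) (hP : P.IsPrime) (hP0 : P ≠ 0) (hmem : (p : 𝓞 K) ∈ P)
    (hsize : (p : ℝ) ^ c < |(D : ℝ)| / 4) :
    c < orderOf (ClassGroup.mk0 ⟨P, mem_nonZeroDivisors_of_ne_zero hP0⟩) := by
  classical
  by_contra hcon
  push_neg at hcon
  set g := ClassGroup.mk0 (R := 𝓞 K) ⟨P, mem_nonZeroDivisors_of_ne_zero hP0⟩ with hg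
  set n := orderOf g with hn
  have hn0 : 0 < n := orderOf_pos g
  have hmemP : P ∈ nonZeroDivisors (Ideal (𝓞 K)) := mem_nonZeroDivisors_of_ne_zero hP0
  have hPn_mem : P ^ n ∈ nonZeroDivisors (Ideal (𝓞 K)) := pow_mem hmemP n
  have hprinc : (P ^ n).IsPrincipal := by
    rw [← ClassGroup.mk0_eq_one_iff hPn_mem]
    have hsub : (⟨P, hmemP⟩ : nonZeroDivisors (Ideal (𝓞 K))) ^ n = ⟨P ^ n, hPn_mem⟩ := rfl
    rw [← hsub, map_pow]
    exact pow_orderOf_eq_one g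
  obtain ⟨α, hα⟩ := hprinc.principal
  -- norm computations
  have habs2 : Ideal.absNorm (Ideal.span {(p : 𝓞 K)}) = p ^ 2 :=
    OrderGtAux.absNorm_span_p K hdeg p
  obtain ⟨R, hspanPR, hPR, hRprime⟩ := OrderGtAux.split_structure K p hp hsplit P hP hmem
  have habsP : Ideal.absNorm P = p :=
    OrderGtAux.absNorm_eq_p K p hp P R hP hRprime hspanPR habs2
  have habsPn : Ideal.absNorm (P ^ n) = p ^ n := by
    rw [_root_.map_pow Ideal.absNorm, habsP]
  have hNα : (Algebra.norm ℤ α).natAbs = p ^ n := by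
    rw [← Ideal.absNorm_span_singleton, ← Ideal.submodule_span_eq, ← hα, habsPn]
  by_cases hrat : ∃ z : ℤ, algebraMap ℤ (𝓞 K) z = α
  · -- rational case: contradiction with the splitting
    obtain ⟨z, rfl⟩ := hrat
    have hz2 : z.natAbs ^ 2 = p ^ n := by
      have := OrderGtAux.norm_int_cast K hdeg z
      rw [this] at hNα
      rwa [Int.natAbs_pow] at hNα
    have hdvd : z.natAbs ∣ p ^ n := ⟨z.natAbs, by rw [← hz2]; ring⟩
    obtain ⟨i, hi, hzi⟩ := (Nat.dvd_prime_pow hp).mp hdvd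
    have h2in : 2 * i = n := by
      have hpp : p ^ (2 * i) = p ^ n := by rw [mul_comm, pow_mul, ← hzi, hz2]
      exact Nat.pow_right_injective hp.two_le hpp
    have hi0 : 0 < i := by omega
    have hassoc : Associated (z : ℤ) ((p : ℤ) ^ i) := by
      rw [Int.associated_iff_natAbs]
      simp [hzi, Int.natAbs_pow]
    have hassoc2 : Associated (algebraMap ℤ (𝓞 K) z) (algebraMap ℤ (𝓞 K) ((p : ℤ) ^ i)) :=
      hassoc.map (algebraMap ℤ (𝓞 K)).toMonoidHom
    have hspan2 : Ideal.span {algebraMap ℤ (𝓞 K) z} = Ideal.span {(p : 𝓞 K)} ^ i := by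
      rw [Ideal.span_singleton_pow]
      rw [Ideal.span_singleton_eq_span_singleton]
      convert hassoc2 using 2
      push_cast
      rfl
    have hfact : P ^ n = P ^ i * R ^ i := by
      rw [hα, Ideal.submodule_span_eq, hspan2, hspanPR, mul_pow]
    have hPnR : P ^ n ≤ R := by
      calc P ^ n = P ^ i * R ^ i := hfact
        _ ≤ R ^ i := Ideal.mul_le_inf.trans inf_le_right
        _ ≤ R := Ideal.pow_le_self hi0.ne'
    have hPle : P ≤ R := Ideal.IsPrime.le_of_pow_le (hP := hRprime) hPnR
    exact hPR ((hP.isMaximal hP0).eq_of_le hRprime.ne_top hPle)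
  · -- irrational case: discriminant bound
    have hirr : ∀ q : ℚ, algebraMap (𝓞 K) K α ≠ algebraMap ℚ K q := by
      intro q hq
      have hint : IsIntegral ℤ q := by
        have h1 : IsIntegral ℤ (algebraMap (𝓞 K) K α) := RingOfIntegers.isIntegral_coe α
        rw [hq] at h1
        exact (isIntegral_algebraMap_iff (algebraMap ℚ K).injective).mp h1
      obtain ⟨z, hz⟩ := IsIntegrallyClosed.isIntegral_iff.mp hint
      apply hrat
      refine ⟨z, RingOfIntegers.coe_injective ?_⟩
      rw [hq, ← hz]
      simp [← IsScalarTower.algebraMap_apply]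
    have hineq := OrderGtAux.norm_lower_bound K hdeg D hdisc hneg α hirr
    have hnormQ : Algebra.norm ℚ (algebraMap (𝓞 K) K α) = ((Algebra.norm ℤ α : ℤ) : ℚ) :=
      (Algebra.coe_norm_int α).symm
    rw [hnormQ] at hineq
    have hNle : ((Algebra.norm ℤ α : ℤ) : ℚ) ≤ (p : ℚ) ^ n := by
      have habs : |((Algebra.norm ℤ α : ℤ) : ℚ)| = (p : ℚ) ^ n := by
        rw [← Int.cast_abs, Int.abs_eq_natAbs, hNα]
        push_cast
        ring
      rw [← habs]
      exact le_abs_self _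
    have hpow : (p : ℚ) ^ n ≤ (p : ℚ) ^ c := by
      apply pow_le_pow_right₀ (by exact_mod_cast hp.one_lt.le) hcon
    have hsize' : 4 * (p : ℚ) ^ c < -(D : ℚ) := by
      have h1 : 4 * (p : ℝ) ^ c < -(D : ℝ) := by
        rw [abs_of_neg (by exact_mod_cast hneg : (D : ℝ) < 0)] at hsize
        linarith
      have h2 : (4 * p ^ c : ℤ) < -D := by exact_mod_cast h1
      exact_mod_cast h2
    linarith
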